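/- Discrete Gronwall inequality: let a_k, b_k, c_k, d_k, γ_k, Δt_k be nonnegative real numbers satisfying a_{k+1} - a_k + b_{k+1}Δt_{k+1} + c_{k+1}Δt_{k+1} - c_kΔt_k ≤ a_k d_k Δt_k + γ_{k+1}Δt_{k+1} for all 0 ≤ k ≤ m. Then a_{m+1} + Σ_{k=0}^{m+1} b_k Δt_k ≤ exp(Σ_{k=0}^{m} d_k Δt_k) · (a_0 + (b_0 + c_0)Δt_0 + Σ_{k=1}^{m+1} γ_k Δt_k). -/

import Mathlib

namespace GronwallPaper

/-- Discrete Gronwall lemma: if nonnegative reals satisfy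
`a_{k+1} - a_k + b_{k+1}Δt_{k+1} + c_{k+1}Δt_{k+1} - c_kΔt_k ≤ a_k d_k Δt_k + γ_{k+1}Δt_{k+1}`
for all `0 ≤ k ≤ m`, then
`a_{m+1} + Σ_{k=0}^{m+1} b_k Δt_k ≤ exp(Σ_{k=0}^m d_k Δt_k) (a_0 + (b_0+c_0)Δt_0 + Σ_{k=1}^{m+1} γ_k Δt_k)`. -/
theorem discrete_gronwall (a b c d γ Δt : ℕ → ℝ) (m : ℕ)
    (ha : ∀ k, 0 ≤ a k) (hb : ∀ k, 0 ≤ b k) (hc : ∀ k, 0 ≤ c k)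
    (hd : ∀ k, 0 ≤ d k) (hγ : ∀ k, 0 ≤ γ k) (hΔt : ∀ k, 0 ≤ Δt k)
    (h : ∀ k ≤ m,
      a (k + 1) - a k + b (k + 1) * Δt (k + 1) + c (k + 1) * Δt (k + 1) - c k * Δt k
        ≤ a k * d k * Δt k + γ (k + 1) * Δt (k + 1)) :
    a (m + 1) + ∑ k ∈ Finset.range (m + 2), b k * Δt k ≤
      Real.exp (∑ k ∈ Finset.range (m + 1), d k * Δt k) *
        (a 0 + (b 0 + c 0) * Δt 0 + ∑ k ∈ Finset.Icc 1 (m + 1), γ k * Δt k) := by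
  set P : ℕ → ℝ := fun n => ∏ k ∈ Finset.range n, (1 + d k * Δt k) with hPdef
  have hdt : ∀ k, 0 ≤ d k * Δt k := fun k => mul_nonneg (hd k) (hΔt k)
  have hP1 : ∀ n, 1 ≤ P n := by
    intro n
    simp only [hPdef]
    induction n with
    | zero => simp
    | succ j ihj =>
      rw [Finset.prod_range_succ]
      nlinarith [hdt j]
  have hSb : ∀ n, 0 ≤ ∑ k ∈ Finset.range n, b k * Δt k := by
    intro n
    exact Finset.sum_nonneg fun k _ => mul_nonneg (hb k) (hΔt k)
  have hSγ : ∀ n, 0 ≤ ∑ k ∈ Finset.Icc 1 n, γ k * Δt k := by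
    intro n
    exact Finset.sum_nonneg fun k _ => mul_nonneg (hγ k) (hΔt k)
  have hR : ∀ n, 0 ≤ a 0 + (b 0 + c 0) * Δt 0 +
      ∑ k ∈ Finset.Icc 1 n, γ k * Δt k := by
    intro n
    have := mul_nonneg (add_nonneg (hb 0) (hc 0)) (hΔt 0)
    have := hSγ n
    linarith [ha 0]
  have key : ∀ n, n ≤ m + 1 →
      a n + ∑ k ∈ Finset.range (n + 1), b k * Δt k + c n * Δt n ≤
        P n * (a 0 + (b 0 + c 0) * Δt 0 + ∑ k ∈ Finset.Icc 1 n, γ k * Δt k) := by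
    intro n
    induction n with
    | zero =>
      intro _
      simp [hPdef, Finset.sum_range_one]
      ring_nf
      nlinarith [mul_nonneg (hc 0) (hΔt 0)]
    | succ k ih =>
      intro hk
      have hkm : k ≤ m := Nat.lt_succ_iff.mp hk
      have ihk := ih (le_trans (Nat.le_succ k) hk)
      have hstep := h k hkm
      have hPk1 : P (k + 1) = P k * (1 + d k * Δt k) := Finset.prod_range_succ _ _
      have hSum : ∑ j ∈ Finset.range (k + 2), b j * Δt j =
          (∑ j ∈ Finset.range (k + 1), b j * Δt j) + b (k + 1) * Δt (k + 1) :=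
        Finset.sum_range_succ _ _
      have hIcc : ∑ j ∈ Finset.Icc 1 (k + 1), γ j * Δt j =
          (∑ j ∈ Finset.Icc 1 k, γ j * Δt j) + γ (k + 1) * Δt (k + 1) := by
        rw [← Finset.Ico_add_one_right_eq_Icc, Finset.sum_Ico_succ_top (Nat.one_le_iff_ne_zero.mpr (Nat.succ_ne_zero k)), Nat.succ_eq_add_one, Finset.Ico_add_one_right_eq_Icc]
      rw [hSum, hIcc, hPk1]
      have hQk : a (k + 1) + ((∑ j ∈ Finset.range (k + 1), b j * Δt j) +
          b (k + 1) * Δt (k + 1)) + c (k + 1) * Δt (k + 1) ≤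
          (1 + d k * Δt k) * (a k + ∑ j ∈ Finset.range (k + 1), b j * Δt j + c k * Δt k)
            + γ (k + 1) * Δt (k + 1) := by
        nlinarith [hdt k, hSb (k + 1), mul_nonneg (hc k) (hΔt k), ha k]
      have h2 : (1 + d k * Δt k) *
          (a k + ∑ j ∈ Finset.range (k + 1), b j * Δt j + c k * Δt k) ≤
          (1 + d k * Δt k) *
          (P k * (a 0 + (b 0 + c 0) * Δt 0 + ∑ j ∈ Finset.Icc 1 k, γ j * Δt j)) := by
        apply mul_le_mul_of_nonneg_left ihk
        linarith [hdt k]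
      have h3 : γ (k + 1) * Δt (k + 1) ≤
          P k * (1 + d k * Δt k) * (γ (k + 1) * Δt (k + 1)) := by
        have hγt := mul_nonneg (hγ (k + 1)) (hΔt (k + 1))
        have : 1 ≤ P k * (1 + d k * Δt k) := by rw [← hPk1]; exact hP1 (k + 1)
        nlinarith
      calc a (k + 1) + ((∑ j ∈ Finset.range (k + 1), b j * Δt j) +
            b (k + 1) * Δt (k + 1)) + c (k + 1) * Δt (k + 1)
          ≤ (1 + d k * Δt k) *
            (P k * (a 0 + (b 0 + c 0) * Δt 0 + ∑ j ∈ Finset.Icc 1 k, γ j * Δt j))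
              + γ (k + 1) * Δt (k + 1) := by linarith
        _ ≤ P k * (1 + d k * Δt k) *
            ((a 0 + (b 0 + c 0) * Δt 0 + ∑ j ∈ Finset.Icc 1 k, γ j * Δt j)
              + γ (k + 1) * Δt (k + 1)) := by nlinarith [h3]
        _ ≤ P k * (1 + d k * Δt k) *
            (a 0 + (b 0 + c 0) * Δt 0 + ((∑ j ∈ Finset.Icc 1 k, γ j * Δt j)
              + γ (k + 1) * Δt (k + 1))) := le_of_eq (by ring)
  have hkey := key (m + 1) le_rfl
  have hPexp : P (m + 1) ≤ Real.exp (∑ k ∈ Finset.range (m + 1), d k * Δt k) := by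
    rw [Real.exp_sum]
    apply Finset.prod_le_prod
    · intro k _; linarith [hdt k]
    · intro k _; linarith [Real.add_one_le_exp (d k * Δt k)]
  have hcΔ := mul_nonneg (hc (m + 1)) (hΔt (m + 1))
  have hRm := hR (m + 1)
  nlinarith [mul_le_mul_of_nonneg_right hPexp hRm]

end GronwallPaper
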